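/- arXiv:1606.02506 — 3 statements merged into one kernel-verified Lean document; each statement's English description precedes it below -/
import Mathlib

section
/- Assume S_L = L is finite and endow Γ ≀ L with the switch-walk-switch generating set L S_Γ L. Let g = (γ,f) ∈ Γ ≀ L not be of the form (e_Γ, δ_s) for some s ∈ L, and let A = {y ∈ Γ : f(y) ≠ e_L} be the set of lamps which are on. Then the word length of g equals the travelling salesman distance in Cay(Γ,S_Γ): |g| = d_TS(e_Γ, A, γ). -/
/-! ### Cayley graphs, word metric, spheres, annuli -/

/-- The Cayley graph of a group with respect to a set `S` of generators
(symmetrized, without loops). -/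
def cayley (G : Type*) [Group G] (S : Set G) : SimpleGraph G where
  Adj g h := g ≠ h ∧ (g⁻¹ * h ∈ S ∨ h⁻¹ * g ∈ S)
  symm := by
    constructor
    rintro g h ⟨hne, hs⟩
    exact ⟨hne.symm, hs.symm⟩
  loopless := by
    constructor
    rintro g ⟨hne, -⟩
    exact hne rfl

variable {G : Type*} [Group G]

/-- The word length of `g`, i.e. the distance from the identity to `g` in the Cayley graph. -/
noncomputable def wlen (S : Set G) (g : G) : ℕ :=
  (cayley G S).dist 1 g

/-- The ball of radius `n`. -/
def wBall (S : Set G) (n : ℕ) : Set G := {g | wlen S g ≤ n}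

/-- The sphere of radius `n`. -/
def wSphere (S : Set G) (n : ℕ) : Set G := {g | wlen S g = n}

/-- The annulus of radius `n` and thickness `r`, i.e. `B(n+r) \ B(n-1)`. -/
def wAnnulus (S : Set G) (n r : ℕ) : Set G := {g | n ≤ wlen S g ∧ wlen S g ≤ n + r}

/-- The part of `A` lying in infinite connected components of the subgraph of the
Cayley graph induced on `A`.  When the infinite component is unique (one-ended case)
this is exactly the infinite component of `A`. -/
def infPart (S : Set G) (A : Set G) : Set G :=
  {g | ∃ hg : g ∈ A, {w : ↥A | ((cayley G S).induce A).Reachable ⟨g, hg⟩ w}.Infinite}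

/-- `S(n,r)^∞ = B(n+r) ∩ B(n-1)^{c,∞}`: the elements of the annulus connected to infinity. -/
def sphereInf (S : Set G) (n r : ℕ) : Set G :=
  wAnnulus S n r ∩ infPart S {g | n ≤ wlen S g}

/-- The graph `S(n,r)^∞` is connected. -/
def SpheresConn (S : Set G) (n r : ℕ) : Prop :=
  ((cayley G S).induce (sphereInf S n r)).Connected

/-- The connection thickness `th_{G,S}(n)`: the least `r` such that `S(n,r)^∞` is connected. -/
noncomputable def connThickness (S : Set G) (n : ℕ) : ℕ :=
  sInf {r | SpheresConn S n r}

/-- The retreat depth of `g`: the least `d ≥ 0` such that `g` belongs to an infinite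
component of the complement of `B(|g|-d-1)`. -/
noncomputable def retreatDepth (S : Set G) (g : G) : ℕ :=
  sInf {d | g ∈ infPart S {x | wlen S g ≤ wlen S x + d}}

/-- `rd(G,S) = sup_g rd(g)`, as an extended natural number. -/
noncomputable def rdSup (S : Set G) : ℕ∞ :=
  ⨆ g : G, (retreatDepth S g : ℕ∞)

/-- `g` is a dead-end: no neighbour of `g` is further away from the identity. -/
def IsDeadEnd (S : Set G) (g : G) : Prop :=
  ∀ h : G, (cayley G S).Adj g h → wlen S h ≤ wlen S g

/-- `x` and `y` are connected by a path staying inside `A`. -/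
def connectedIn (S : Set G) (A : Set G) (x y : G) : Prop :=
  ∃ w : (cayley G S).Walk x y, ∀ v ∈ w.support, v ∈ A

/-- The travelling salesman distance from `x` to `y` through `A`: the length of the
shortest walk from `x` to `y` visiting every vertex of `A`. -/
noncomputable def tsDist {V : Type*} (H : SimpleGraph V) (x : V) (A : Set V) (y : V) : ℕ :=
  sInf {n | ∃ w : H.Walk x y, w.length = n ∧ ∀ a ∈ A, a ∈ w.support}

/-! ### Entropy of partitions -/

/-- Shannon entropy of the partition of the finite set `A` into blocks `P x` (the block
of `x ∈ A`), with respect to the uniform measure: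
`H(Π) = -∑_{π ∈ Π} μ(π) log μ(π) = -(1/|A|) ∑_{x ∈ A} log (|P x|/|A|)`. -/
noncomputable def partitionEntropy (A : Set G) (P : G → Set G) : ℝ :=
  -(1 / (Nat.card ↥A : ℝ)) * ∑ᶠ x ∈ A, Real.log ((Nat.card ↥(P x) : ℝ) / (Nat.card ↥A : ℝ))

/-- Normalised entropy `h(Π) = H(Π)/log |Π|`, where `|Π|` is the number of blocks. -/
noncomputable def normalizedEntropy (A : Set G) (P : G → Set G) : ℝ :=
  partitionEntropy A P / Real.log (Nat.card ↥(P '' A))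

/-- The block of `x` in the partition `Π(n,r)` of `S(n)`: elements of `S(n)` joined
to `x` by a path inside the annulus `S(n,r)`. -/
def piBlock (S : Set G) (n r : ℕ) (x : G) : Set G :=
  {y | y ∈ wSphere S n ∧ connectedIn S (wAnnulus S n r) x y}

/-- The block of `x` in the partition `Π(n,r)^∞` of `S(n)^∞`: elements of `S(n)^∞`
joined to `x` by a path inside `S(n,r)^∞`. -/
def piBlockInf (S : Set G) (n r : ℕ) (x : G) : Set G :=
  {y | y ∈ sphereInf S n 0 ∧ connectedIn S (sphereInf S n r) x y}

/-! ### Wreath products -/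

/-- Finitely supported functions `Γ → L`, as a subgroup of the product group. -/
def LampGroup (Γ L : Type*) [Group Γ] [Group L] : Subgroup (Γ → L) where
  carrier := {f | (Function.mulSupport f).Finite}
  one_mem' := by
    refine Set.Finite.subset Set.finite_empty fun x hx => ?_
    exact hx rfl
  mul_mem' := by
    intro a b ha hb
    exact (Set.Finite.union ha hb).subset (Function.mulSupport_mul a b)
  inv_mem' := by
    intro a ha
    refine ha.subset fun x hx => ?_
    simp only [Function.mem_mulSupport, Pi.inv_apply, ne_eq, inv_eq_one] at hx
    exact hx

variable (Γ L : Type*) [Group Γ] [Group L]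

/-- Translation action of `Γ` on finitely supported lamp configurations. -/
noncomputable def shiftAut (γ : Γ) : ↥(LampGroup Γ L) ≃* ↥(LampGroup Γ L) where
  toFun f := ⟨fun x => (f : Γ → L) (γ⁻¹ * x), by
    show (Function.mulSupport fun x => (f : Γ → L) (γ⁻¹ * x)).Finite
    exact Set.Finite.preimage ((mul_right_injective γ⁻¹).injOn) f.2⟩
  invFun f := ⟨fun x => (f : Γ → L) (γ * x), by
    show (Function.mulSupport fun x => (f : Γ → L) (γ * x)).Finite
    exact Set.Finite.preimage ((mul_right_injective γ).injOn) f.2⟩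
  left_inv := by
    intro f
    apply Subtype.ext
    funext x
    simp
  right_inv := by
    intro f
    apply Subtype.ext
    funext x
    simp
  map_mul' := by
    intro f g
    apply Subtype.ext
    rfl

/-- The action homomorphism `Γ →* Aut(⊕_Γ L)`. -/
noncomputable def shiftHom : Γ →* MulAut ↥(LampGroup Γ L) where
  toFun := shiftAut Γ L
  map_one' := by
    apply MulEquiv.ext
    intro f
    apply Subtype.ext
    funext x
    simp [shiftAut]
  map_mul' := by
    intro a b
    apply MulEquiv.ext
    intro f
    apply Subtype.ext
    funext x
    simp [shiftAut, mul_assoc]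

/-- The (restricted) wreath product `Γ ≀ L = Γ ⋉ (⊕_Γ L)`. -/
abbrev Wreath := ↥(LampGroup Γ L) ⋊[shiftHom Γ L] Γ

open Classical in
/-- The element `(e_Γ, δ_l)` of the wreath product: lamp `l` at the identity. -/
noncomputable def lampElt (l : L) : Wreath Γ L :=
  ⟨⟨fun x => if x = (1 : Γ) then l else 1, by
    refine Set.Finite.subset (Set.finite_singleton (1 : Γ)) fun x hx => ?_
    rcases eq_or_ne x 1 with h | h
    · simp [h]
    · exact absurd (if_neg h) hx⟩, 1⟩

/-- The element `(γ, Id)` of the wreath product. -/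
def baseElt (γ : Γ) : Wreath Γ L := ⟨1, γ⟩

/-- The "switch-walk-switch" generating set `L S_Γ L`. -/
noncomputable def swsw (SΓ : Set Γ) : Set (Wreath Γ L) :=
  {g | ∃ l l' : L, ∃ s ∈ SΓ, g = lampElt Γ L l * baseElt Γ L s * lampElt Γ L l'}

/-- The "switch or walk" generating set `S_Γ ∪ S_L`. -/
noncomputable def walkOrSwitch (SΓ : Set Γ) (SL : Set L) : Set (Wreath Γ L) :=
  (baseElt Γ L '' SΓ) ∪ (lampElt Γ L '' SL)

/-- `ℤ` written multiplicatively. -/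
abbrev MZ := Multiplicative ℤ

/-- The generating set `{±1}` of `ℤ`. -/
def genZ : Set MZ := {Multiplicative.ofAdd 1, Multiplicative.ofAdd (-1)}

/-- The ladder `ℤ × ℤ/2ℤ` written multiplicatively. -/
abbrev Ladder := Multiplicative (ℤ × ZMod 2)

/-- The generating set `{(±1,0), (0,1)}` of the ladder. -/
def genLadder : Set Ladder :=
  {Multiplicative.ofAdd (1, 0), Multiplicative.ofAdd (-1, 0), Multiplicative.ofAdd (0, 1)}

/-- The set of vertices of the minimal subtree of a tree containing a set `X`:
all vertices lying on a geodesic between two points of `X`. -/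
def treeHull {V : Type*} (H : SimpleGraph V) (X : Set V) : Set V :=
  {v | ∃ x ∈ X, ∃ y ∈ X, H.dist x v + H.dist v y = H.dist x y}



/-! ### Auxiliary lemmas -/

section WordHelpers

variable {G' : Type*} [Group G'] {S : Set G'}

/-- Partial products of a word, starting at `a`. -/
def wordPartials (a : G') : List G' → List G'
  | [] => [a]
  | s :: t => a :: wordPartials (a * s) t

lemma self_mem_wordPartials (a : G') (l : List G') : a ∈ wordPartials a l := by
  cases l <;> simp [wordPartials]

lemma wordPartials_mul (c : G') : ∀ (l : List G') (a : G'),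
    wordPartials (c * a) l = (wordPartials a l).map (fun x => c * x)
  | [], a => by simp [wordPartials]
  | s :: t, a => by
    simp only [wordPartials, List.map_cons]
    rw [mul_assoc]
    exact congrArg _ (wordPartials_mul c t (a * s))

lemma exists_walk_of_word : ∀ (l : List G'), (∀ s ∈ l, s = 1 ∨ s ∈ S ∨ s⁻¹ ∈ S) → ∀ a : G',
    ∃ w : (cayley G' S).Walk a (a * l.prod), w.length ≤ l.length ∧
      ∀ x ∈ wordPartials a l, x ∈ w.support
  | [], _, a => by
    refine ⟨SimpleGraph.Walk.nil.copy rfl (by simp), by rw [SimpleGraph.Walk.length_copy]; simp, ?_⟩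
    intro x hx
    simp only [wordPartials, List.mem_singleton] at hx
    subst hx
    simp
  | s :: t, h, a => by
    have ht := fun x hx => h x (List.mem_cons_of_mem _ hx)
    by_cases hs1 : s = 1
    · subst hs1
      obtain ⟨w, hw1, hw2⟩ := exists_walk_of_word t ht a
      refine ⟨w.copy rfl (by simp), ?_, ?_⟩
      · rw [SimpleGraph.Walk.length_copy]
        exact hw1.trans (Nat.le_succ _)
      · intro x hx
        simp only [wordPartials, mul_one, List.mem_cons] at hx
        rw [SimpleGraph.Walk.support_copy]
        rcases hx with rfl | hx
        · exact w.start_mem_support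
        · exact hw2 x hx
    · have hmem : s ∈ S ∨ s⁻¹ ∈ S := (h s (List.mem_cons_self)).resolve_left hs1
      have hadj : (cayley G' S).Adj a (a * s) := by
        refine ⟨fun hc => hs1 (left_eq_mul.mp hc), ?_⟩
        rcases hmem with hm | hm
        · left; rwa [inv_mul_cancel_left]
        · right
          have : (a * s)⁻¹ * a = s⁻¹ := by group
          rwa [this]
      obtain ⟨w, hw1, hw2⟩ := exists_walk_of_word t ht (a * s)
      refine ⟨(SimpleGraph.Walk.cons hadj w).copy rfl (by rw [List.prod_cons, mul_assoc]), ?_, ?_⟩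
      · rw [SimpleGraph.Walk.length_copy, SimpleGraph.Walk.length_cons, List.length_cons]
        exact Nat.succ_le_succ hw1
      · intro x hx
        simp only [wordPartials, List.mem_cons] at hx
        rw [SimpleGraph.Walk.support_copy, SimpleGraph.Walk.support_cons]
        rcases hx with rfl | hx
        · exact List.mem_cons_self
        · exact List.mem_cons_of_mem _ (hw2 x hx)

lemma word_of_walk {a b : G'} (p : (cayley G' S).Walk a b) : ∃ l : List G',
    l.length = p.length ∧ (∀ x ∈ l, x ≠ 1 ∧ (x ∈ S ∨ x⁻¹ ∈ S)) ∧ a * l.prod = b := by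
  induction p with
  | nil => exact ⟨[], by simp⟩
  | @cons u v c h q ih =>
    obtain ⟨l, h1, h2, h3⟩ := ih
    refine ⟨(u⁻¹ * v) :: l, by simp [h1], ?_, ?_⟩
    · intro x hx
      rcases List.mem_cons.1 hx with rfl | hx
      · refine ⟨fun hc => h.1 (inv_mul_eq_one.mp hc), ?_⟩
        rcases h.2 with hm | hm
        · exact Or.inl hm
        · right; rwa [mul_inv_rev, inv_inv]
      · exact h2 x hx
    · rw [List.prod_cons, ← mul_assoc, mul_inv_cancel_left, h3]

lemma cayley_reachable_one (hgen : Subgroup.closure S = ⊤) (x : G') :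
    (cayley G' S).Reachable 1 x := by
  have hx : x ∈ Submonoid.closure (S ∪ S⁻¹) := by
    rw [← Subgroup.closure_toSubmonoid]
    exact hgen ▸ Subgroup.mem_top x
  obtain ⟨l, hl, rfl⟩ := Submonoid.exists_list_of_mem_closure hx
  obtain ⟨w, -, -⟩ := exists_walk_of_word l (fun s hs => by
    rcases hl s hs with hm | hm
    · exact Or.inr (Or.inl hm)
    · exact Or.inr (Or.inr hm)) 1
  exact ⟨w.copy rfl (one_mul _)⟩

lemma cayley_reachable (hgen : Subgroup.closure S = ⊤) (x y : G') :
    (cayley G' S).Reachable x y :=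
  (cayley_reachable_one hgen x).symm.trans (cayley_reachable_one hgen y)

lemma exists_walk_through_finset (hgen : Subgroup.closure S = ⊤) (t : Finset G') :
    ∀ x y : G', ∃ w : (cayley G' S).Walk x y, ∀ a ∈ t, a ∈ w.support := by
  classical
  induction t using Finset.induction_on with
  | empty => exact fun x y => (cayley_reachable hgen x y).elim fun w => ⟨w, by simp⟩
  | @insert c t hc ih =>
    intro x y
    obtain ⟨w₂, hw₂⟩ := ih c y
    obtain ⟨w₁⟩ := cayley_reachable hgen x c
    refine ⟨w₁.append w₂, ?_⟩
    intro b hb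
    rw [SimpleGraph.Walk.mem_support_append_iff]
    rcases Finset.mem_insert.1 hb with rfl | hb
    · exact Or.inr w₂.start_mem_support
    · exact Or.inr (hw₂ b hb)

lemma exists_walk_through (hgen : Subgroup.closure S = ⊤) {A : Set G'} (hA : A.Finite)
    (x y : G') : ∃ w : (cayley G' S).Walk x y, ∀ a ∈ A, a ∈ w.support := by
  obtain ⟨w, hw⟩ := exists_walk_through_finset hgen hA.toFinset x y
  exact ⟨w, fun a ha => hw a (hA.mem_toFinset.mpr ha)⟩

end WordHelpers



section WreathHelpers

variable {Γ' L' : Type*} [Group Γ'] [Group L'] {SΓ : Set Γ'}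

lemma left_apply_mul (g h : Wreath Γ' L') (x : Γ') :
    ((g * h).left : Γ' → L') x
      = ((g.left : Γ' → L')) x * ((h.left : Γ' → L')) (g.right⁻¹ * x) := rfl

lemma mk_left (F : ↥(LampGroup Γ' L')) (a : Γ') :
    ((⟨F, a⟩ : Wreath Γ' L')).left = F := rfl

lemma mk_right (F : ↥(LampGroup Γ' L')) (a : Γ') :
    ((⟨F, a⟩ : Wreath Γ' L')).right = a := rfl

open Classical in
lemma lampElt_left_apply (l : L') (x : Γ') :
    (((lampElt Γ' L' l).left : Γ' → L')) x = if x = 1 then l else 1 := rfl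

lemma lampElt_right (l : L') : (lampElt Γ' L' l).right = 1 := rfl

lemma baseElt_left_apply (a : Γ') (x : Γ') :
    (((baseElt Γ' L' a).left : Γ' → L')) x = 1 := rfl

lemma baseElt_right (a : Γ') : (baseElt Γ' L' a).right = a := rfl

lemma one_left_apply (x : Γ') : (((1 : Wreath Γ' L').left : Γ' → L')) x = 1 := rfl

lemma sws_right (l₀ l₁ : L') (s : Γ') :
    (lampElt Γ' L' l₀ * baseElt Γ' L' s * lampElt Γ' L' l₁).right = s := by
  simp [SemidirectProduct.mul_right, lampElt_right, baseElt_right]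

open Classical in
lemma sws_left_apply (l₀ l₁ : L') (s : Γ') (x : Γ') :
    ((( lampElt Γ' L' l₀ * baseElt Γ' L' s * lampElt Γ' L' l₁).left : Γ' → L')) x
      = (if x = 1 then l₀ else 1) * (if x = s then l₁ else 1) := by
  rw [left_apply_mul, left_apply_mul, lampElt_left_apply, baseElt_left_apply,
    lampElt_left_apply, mul_one]
  congr 1
  rw [SemidirectProduct.mul_right, lampElt_right, baseElt_right, one_mul]
  by_cases hx : x = s
  · rw [if_pos hx, if_pos (by rw [hx, inv_mul_cancel])]
  · rw [if_neg hx, if_neg (fun hc => hx (by rwa [inv_mul_eq_one, eq_comm] at hc))]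

lemma inv_left_apply (g : Wreath Γ' L') (x : Γ') :
    ((g⁻¹.left : Γ' → L')) x = (((g.left : Γ' → L')) (g.right * x))⁻¹ := by
  show (((g.left : Γ' → L')) ((g.right⁻¹)⁻¹ * x))⁻¹ = _
  rw [inv_inv]

lemma wreath_ext {g h : Wreath Γ' L'}
    (h1 : ∀ x, ((g.left : Γ' → L')) x = ((h.left : Γ' → L')) x)
    (h2 : g.right = h.right) : g = h :=
  SemidirectProduct.ext (Subtype.ext (funext h1)) h2

lemma lampElt_one : lampElt Γ' L' (1 : L') = 1 :=
  wreath_ext (fun x => by rw [lampElt_left_apply, one_left_apply, ite_self]) rfl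

lemma lampElt_mul (a b : L') : lampElt Γ' L' a * lampElt Γ' L' b = lampElt Γ' L' (a * b) :=
  wreath_ext (fun x => by
    rw [left_apply_mul, lampElt_left_apply, lampElt_left_apply, lampElt_right, inv_one,
      one_mul, lampElt_left_apply]
    by_cases hx : x = 1 <;> simp [hx]) (by
    simp [SemidirectProduct.mul_right, lampElt_right])

lemma baseElt_mul (a b : Γ') : baseElt Γ' L' a * baseElt Γ' L' b = baseElt Γ' L' (a * b) :=
  wreath_ext (fun x => by
    rw [left_apply_mul, baseElt_left_apply, baseElt_left_apply, baseElt_left_apply, one_mul])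
    (by rw [SemidirectProduct.mul_right, baseElt_right, baseElt_right, baseElt_right])

lemma baseElt_one : baseElt Γ' L' (1 : Γ') = 1 := rfl

lemma lampElt_inv (a : L') : (lampElt Γ' L' a)⁻¹ = lampElt Γ' L' a⁻¹ :=
  inv_eq_of_mul_eq_one_right (by rw [lampElt_mul, mul_inv_cancel, lampElt_one])

lemma baseElt_inv (a : Γ') : (baseElt Γ' L' a)⁻¹ = baseElt Γ' L' a⁻¹ :=
  inv_eq_of_mul_eq_one_right (by rw [baseElt_mul, mul_inv_cancel, baseElt_one])

lemma sws_inv (l₀ l₁ : L') (s : Γ') :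
    (lampElt Γ' L' l₀ * baseElt Γ' L' s * lampElt Γ' L' l₁)⁻¹
      = lampElt Γ' L' l₁⁻¹ * baseElt Γ' L' s⁻¹ * lampElt Γ' L' l₀⁻¹ := by
  apply inv_eq_of_mul_eq_one_right
  simp only [mul_assoc]
  rw [← mul_assoc (lampElt Γ' L' l₁), lampElt_mul, mul_inv_cancel, lampElt_one, one_mul,
    ← mul_assoc (baseElt Γ' L' s), baseElt_mul, mul_inv_cancel, baseElt_one, one_mul,
    lampElt_mul, mul_inv_cancel, lampElt_one]

lemma gen_right_mem {g : Wreath Γ' L'}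
    (h : g ∈ swsw Γ' L' SΓ ∨ g⁻¹ ∈ swsw Γ' L' SΓ) :
    g.right ∈ SΓ ∨ (g.right)⁻¹ ∈ SΓ := by
  rcases h with ⟨l, l', s, hs, rfl⟩ | ⟨l, l', s, hs, hi⟩
  · rw [sws_right]; exact Or.inl hs
  · right
    have : g.right⁻¹ = s := by
      rw [← SemidirectProduct.inv_right, hi, sws_right]
    rwa [this]

lemma gen_left_support {g : Wreath Γ' L'}
    (h : g ∈ swsw Γ' L' SΓ ∨ g⁻¹ ∈ swsw Γ' L' SΓ) {x : Γ'}
    (hx : ((g.left : Γ' → L')) x ≠ 1) : x = 1 ∨ x = g.right := by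
  rcases h with ⟨l, l', s, hs, rfl⟩ | ⟨l, l', s, hs, hi⟩
  · rw [sws_left_apply] at hx
    rw [sws_right]
    by_contra hc
    push_neg at hc
    exact hx (by rw [if_neg hc.1, if_neg hc.2, one_mul])
  · have hg : g = (lampElt Γ' L' l * baseElt Γ' L' s * lampElt Γ' L' l')⁻¹ := by
      rw [← hi, inv_inv]
    rw [hg, inv_left_apply, sws_right, sws_left_apply] at hx
    rw [hg, SemidirectProduct.inv_right, sws_right]
    by_contra hc
    push_neg at hc
    apply hx
    rw [if_neg, if_neg, one_mul, inv_one]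
    · intro hcc
      exact hc.1 (by rwa [mul_eq_left] at hcc)
    · intro hcc
      exact hc.2 (eq_inv_of_mul_eq_one_right hcc)

open Classical in
lemma prod_left_support : ∀ (l : List (Wreath Γ' L')),
    (∀ g ∈ l, g ∈ swsw Γ' L' SΓ ∨ g⁻¹ ∈ swsw Γ' L' SΓ) →
    ∀ x : Γ', ((l.prod.left : Γ' → L')) x ≠ 1 →
      x ∈ wordPartials (1 : Γ') (l.map fun g => g.right)
  | [], _, x, hx => absurd (one_left_apply x) hx
  | g :: t, h, x, hx => by
    rw [List.prod_cons, left_apply_mul] at hx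
    simp only [List.map_cons, wordPartials, List.mem_cons, one_mul]
    by_cases h1 : ((g.left : Γ' → L')) x = 1
    · have h2 : ((t.prod.left : Γ' → L')) (g.right⁻¹ * x) ≠ 1 := by
        intro hc
        rw [h1, hc, mul_one] at hx
        exact hx rfl
      have hmem := prod_left_support t (fun g' hg' => h g' (List.mem_cons_of_mem _ hg')) _ h2
      right
      have heq : wordPartials g.right (List.map (fun g => g.right) t)
          = (wordPartials 1 (List.map (fun g => g.right) t)).map (fun y => g.right * y) := by
        simpa using wordPartials_mul g.right (List.map (fun g => g.right) t) 1
      rw [heq]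
      exact List.mem_map.2 ⟨g.right⁻¹ * x, hmem, mul_inv_cancel_left _ _⟩
    · have hx1 : ((g.left : Γ' → L')) x ≠ 1 := h1
      rcases gen_left_support (h g (List.mem_cons_self)) hx1 with rfl | rfl
      · exact Or.inl rfl
      · exact Or.inr (self_mem_wordPartials _ _)


open Classical in
/-- δ-configuration: lamp `v` at position `a`. -/
noncomputable def deltaLamp (a : Γ') (v : L') : ↥(LampGroup Γ' L') :=
  ⟨fun x => if x = a then v else 1, by
    refine Set.Finite.subset (Set.finite_singleton a) fun x hx => ?_
    rcases eq_or_ne x a with hh | hh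
    · simp [hh]
    · exact absurd (if_neg hh) hx⟩

lemma gen_ok {a c : Γ'} (h : (cayley Γ' SΓ).Adj a c) (v v' : L') :
    (lampElt Γ' L' v * baseElt Γ' L' (a⁻¹ * c) * lampElt Γ' L' v') ≠ 1 ∧
    (lampElt Γ' L' v * baseElt Γ' L' (a⁻¹ * c) * lampElt Γ' L' v' ∈ swsw Γ' L' SΓ ∨
     (lampElt Γ' L' v * baseElt Γ' L' (a⁻¹ * c) * lampElt Γ' L' v')⁻¹ ∈ swsw Γ' L' SΓ) := by
  constructor
  · intro hc
    have h1 := congrArg SemidirectProduct.right hc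
    rw [sws_right, SemidirectProduct.one_right] at h1
    exact h.1 (inv_mul_eq_one.mp h1)
  · rcases h.2 with hm | hm
    · exact Or.inl ⟨v, v', _, hm, rfl⟩
    · right
      rw [sws_inv]
      refine ⟨v'⁻¹, v⁻¹, c⁻¹ * a, hm, ?_⟩
      rw [show (a⁻¹ * c)⁻¹ = c⁻¹ * a by group]

open Classical in
lemma exists_word_of_walk : ∀ {a b : Γ'} (w : (cayley Γ' SΓ).Walk a b)
    (F : ↥(LampGroup Γ' L')), 0 < w.length →
    (∀ x : Γ', (F : Γ' → L') x ≠ 1 → x ∈ w.support) →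
    ∃ l : List (Wreath Γ' L'), l.length = w.length ∧
      (∀ g ∈ l, g ≠ 1 ∧ (g ∈ swsw Γ' L' SΓ ∨ g⁻¹ ∈ swsw Γ' L' SΓ)) ∧
      baseElt Γ' L' a * l.prod = ⟨F, b⟩ := by
  intro a b w
  induction w with
  | nil => exact fun F hw _ => absurd hw (by simp)
  | @cons a c b h q ih =>
    intro F _ hsupp
    have hac : a ≠ c := h.1
    cases q with
    | nil =>
      refine ⟨[lampElt Γ' L' ((F : Γ' → L') a) * baseElt Γ' L' (a⁻¹ * c)
          * lampElt Γ' L' ((F : Γ' → L') c)], by simp, ?_, ?_⟩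
      · intro g hg
        rw [List.mem_singleton] at hg
        subst hg
        exact gen_ok h _ _
      · rw [List.prod_cons, List.prod_nil, mul_one]
        apply wreath_ext
        · intro x
          rw [left_apply_mul, baseElt_left_apply, baseElt_right, sws_left_apply, one_mul,
            mk_left]
          by_cases hxa : x = a
          · subst hxa
            rw [if_pos (inv_mul_cancel x), if_neg (fun hc => hac (mul_left_cancel hc)),
              mul_one]
          · by_cases hxc : x = c
            · subst hxc
              rw [if_neg (fun hc => hac (inv_mul_eq_one.mp hc)), if_pos rfl, one_mul]
            · rw [if_neg (fun hc => hxa (inv_mul_eq_one.mp hc).symm),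
                if_neg (fun hc => hxc (mul_left_cancel hc)), one_mul]
              by_contra hF
              have hmem := hsupp x (fun hc => hF (by rw [hc]))
              rw [SimpleGraph.Walk.support_cons, SimpleGraph.Walk.support_nil,
                List.mem_cons, List.mem_singleton] at hmem
              rcases hmem with rfl | rfl
              · exact hxa rfl
              · exact hxc rfl
        · rw [SemidirectProduct.mul_right, baseElt_right, sws_right, mk_right,
            mul_inv_cancel_left]
    | @cons c d b h' q' =>
      set F' : ↥(LampGroup Γ' L') := ⟨Function.update (F : Γ' → L') a 1, by
        apply F.2.subset
        intro x hx
        rcases eq_or_ne x a with rfl | hne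
        · rw [Function.mem_mulSupport, Function.update_self] at hx
          exact absurd rfl hx
        · rwa [Function.mem_mulSupport, Function.update_of_ne hne] at hx⟩ with hF'def
      have hsupp' : ∀ x : Γ', (F' : Γ' → L') x ≠ 1 →
          x ∈ (SimpleGraph.Walk.cons h' q').support := by
        intro x hx
        have hxa : x ≠ a := by
          intro hc
          subst hc
          exact hx (Function.update_self x 1 _)
        have hFx : (F : Γ' → L') x ≠ 1 := by
          have : (F' : Γ' → L') x = (F : Γ' → L') x := Function.update_of_ne hxa 1 _
          rwa [this] at hx
        have hmem := hsupp x hFx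
        rw [SimpleGraph.Walk.support_cons, List.mem_cons] at hmem
        exact hmem.resolve_left hxa
      obtain ⟨l', hl1, hl2, hl3⟩ := ih F' (by simp) hsupp'
      refine ⟨(lampElt Γ' L' ((F : Γ' → L') a) * baseElt Γ' L' (a⁻¹ * c)
          * lampElt Γ' L' 1) :: l', by simp [hl1], ?_, ?_⟩
      · intro g hg
        rcases List.mem_cons.1 hg with rfl | hg
        · exact gen_ok h _ _
        · exact hl2 g hg
      · rw [List.prod_cons, ← mul_assoc]
        have step1 : baseElt Γ' L' a * (lampElt Γ' L' ((F : Γ' → L') a)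
              * baseElt Γ' L' (a⁻¹ * c) * lampElt Γ' L' 1)
            = (⟨deltaLamp a ((F : Γ' → L') a), 1⟩ : Wreath Γ' L') * baseElt Γ' L' c := by
          apply wreath_ext
          · intro x
            simp only [left_apply_mul, baseElt_left_apply, lampElt_left_apply,
              baseElt_right, lampElt_right, SemidirectProduct.mul_right, mk_left, mk_right,
              one_mul, mul_one, inv_one, ite_self]
            show (if a⁻¹ * x = 1 then (F : Γ' → L') a else 1)
                = if x = a then (F : Γ' → L') a else 1
            by_cases hxa : x = a
            · subst hxa
              rw [if_pos (inv_mul_cancel x), if_pos rfl]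
            · rw [if_neg (fun hc => hxa (inv_mul_eq_one.mp hc).symm), if_neg hxa]
          · simp only [SemidirectProduct.mul_right, baseElt_right, lampElt_right,
              mk_right, mul_one, one_mul]
            exact mul_inv_cancel_left a c
        rw [step1, mul_assoc, hl3]
        apply wreath_ext
        · intro x
          simp only [left_apply_mul, mk_left, mk_right]
          rw [inv_one, one_mul]
          show (if x = a then (F : Γ' → L') a else 1)
              * Function.update (F : Γ' → L') a 1 x = (F : Γ' → L') x
          by_cases hxa : x = a
          · subst hxa
            rw [if_pos rfl, Function.update_self, mul_one]
          · rw [if_neg hxa, Function.update_of_ne hxa, one_mul]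
        · simp only [SemidirectProduct.mul_right, mk_right, one_mul]


end WreathHelpers


/-- In `Γ ≀ L` with the switch-walk-switch generating set `L S_Γ L`
(`S_L = L` finite), the word length of `g = (γ, f)` not of the form `(e_Γ, δ_s)` is the
travelling salesman distance from `e_Γ` to `γ` through the support of `f`. -/
theorem stmt_1 {Γ L : Type*} [Group Γ] [Group L] [Finite L]
    (SΓ : Set Γ) (hfin : SΓ.Finite) (hgen : Subgroup.closure SΓ = ⊤)
    (γ : Γ) (f : Γ → L) (hf : f ∈ LampGroup Γ L)
    (hg : ¬ ∃ s : L, (⟨⟨f, hf⟩, γ⟩ : Wreath Γ L) = lampElt Γ L s) :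
    wlen (swsw Γ L SΓ) (⟨⟨f, hf⟩, γ⟩ : Wreath Γ L)
      = tsDist (cayley Γ SΓ) 1 (Function.mulSupport f) γ := by
  classical
  have hTne : {n | ∃ w : (cayley Γ SΓ).Walk 1 γ, w.length = n ∧
      ∀ a ∈ Function.mulSupport f, a ∈ w.support}.Nonempty := by
    obtain ⟨w, hw⟩ := exists_walk_through (S := SΓ) hgen hf 1 γ
    exact ⟨w.length, w, rfl, hw⟩
  obtain ⟨p, hplen, hpsupp⟩ := Nat.sInf_mem hTne
  cases p with
  | nil =>
    refine absurd ⟨f 1, wreath_ext (fun x => ?_) rfl⟩ hg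
    show f x = _
    rw [lampElt_left_apply]
    rcases eq_or_ne x 1 with rfl | hx
    · rw [if_pos rfl]
    · rw [if_neg hx]
      by_contra hfx
      have hmem := hpsupp x hfx
      rw [SimpleGraph.Walk.support_nil, List.mem_singleton] at hmem
      exact hx hmem
  | @cons _ c _ h q =>
    obtain ⟨l, hl1, hl2, hl3⟩ := exists_word_of_walk (SimpleGraph.Walk.cons h q)
      ⟨f, hf⟩ (by simp) (fun x hx => hpsupp x hx)
    rw [baseElt_one, one_mul] at hl3
    obtain ⟨wup, hwlen, -⟩ := exists_walk_of_word (S := swsw Γ L SΓ) l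
      (fun s hs => Or.inr (hl2 s hs).2) 1
    have hcopy : (1 : Wreath Γ L) * l.prod = (⟨⟨f, hf⟩, γ⟩ : Wreath Γ L) := by
      rw [one_mul, hl3]
    have hle1 : (cayley (Wreath Γ L) (swsw Γ L SΓ)).dist 1 (⟨⟨f, hf⟩, γ⟩ : Wreath Γ L)
        ≤ sInf {n | ∃ w : (cayley Γ SΓ).Walk 1 γ, w.length = n ∧
          ∀ a ∈ Function.mulSupport f, a ∈ w.support} := by
      have hd := SimpleGraph.dist_le (wup.copy rfl hcopy)
      rw [SimpleGraph.Walk.length_copy] at hd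
      calc (cayley (Wreath Γ L) (swsw Γ L SΓ)).dist 1 (⟨⟨f, hf⟩, γ⟩ : Wreath Γ L)
          ≤ wup.length := hd
        _ ≤ l.length := hwlen
        _ = (SimpleGraph.Walk.cons h q).length := hl1
        _ = _ := hplen
    obtain ⟨qq, hqq⟩ := SimpleGraph.Reachable.exists_walk_length_eq_dist
      ⟨wup.copy rfl hcopy⟩
    obtain ⟨l₂, hl₂1, hl₂2, hl₂3⟩ := word_of_walk qq
    rw [one_mul] at hl₂3
    obtain ⟨w₃, hw₃1, hw₃2⟩ := exists_walk_of_word (S := SΓ) (l₂.map fun gg => gg.right)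
      (fun s hs => by
        obtain ⟨g', hg', rfl⟩ := List.mem_map.1 hs
        exact Or.inr (gen_right_mem (hl₂2 g' hg').2)) 1
    have h1 : (l₂.map fun gg : Wreath Γ L => gg.right).prod = (l₂.prod).right := by
      have h2 := map_list_prod (SemidirectProduct.rightHom (φ := shiftHom Γ L)) l₂
      rw [SemidirectProduct.rightHom_eq_right] at h2
      exact h2.symm
    have hσ : (1 : Γ) * (l₂.map fun gg : Wreath Γ L => gg.right).prod = γ := by
      rw [one_mul, h1, hl₂3, mk_right]
    have hsupp₄ : ∀ a ∈ Function.mulSupport f, a ∈ (w₃.copy rfl hσ).support := by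
      intro a ha
      rw [SimpleGraph.Walk.support_copy]
      apply hw₃2
      apply prod_left_support (SΓ := SΓ) l₂ (fun g' hg' => (hl₂2 g' hg').2)
      rw [hl₂3]
      exact ha
    have hge : sInf {n | ∃ w : (cayley Γ SΓ).Walk 1 γ, w.length = n ∧
          ∀ a ∈ Function.mulSupport f, a ∈ w.support}
        ≤ (cayley (Wreath Γ L) (swsw Γ L SΓ)).dist 1 (⟨⟨f, hf⟩, γ⟩ : Wreath Γ L) := by
      have hsle : sInf {n | ∃ w : (cayley Γ SΓ).Walk 1 γ, w.length = n ∧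
          ∀ a ∈ Function.mulSupport f, a ∈ w.support} ≤ (w₃.copy rfl hσ).length :=
        Nat.sInf_le ⟨w₃.copy rfl hσ, rfl, hsupp₄⟩
      rw [SimpleGraph.Walk.length_copy] at hsle
      calc sInf {n | ∃ w : (cayley Γ SΓ).Walk 1 γ, w.length = n ∧
          ∀ a ∈ Function.mulSupport f, a ∈ w.support} ≤ w₃.length := hsle
        _ ≤ (l₂.map fun gg : Wreath Γ L => gg.right).length := hw₃1
        _ = l₂.length := List.length_map _
        _ = qq.length := hl₂1
        _ = _ := hqq
    exact le_antisymm hle1 hge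
end

section
/- Let G be an infinite group with finite generating set S, and let 0 ≤ ℓ ≤ k and n ≥ 0. Then S(n,k)^∞ is connected if and only if any two elements of S(n+ℓ) ∩ B(n−1)^{c,∞} are connected by paths staying inside S(n,k)^∞. -/
variable {G : Type*} [Group G]

variable (Γ L : Type*) [Group Γ] [Group L]

section StmtTwoAux

open SimpleGraph

variable {G : Type*} [Group G] {S : Set G}

/-- Left multiplication as a graph homomorphism of the Cayley graph. -/
private def cayleyMulLeft (S : Set G) (a : G) : cayley G S →g cayley G S where
  toFun := fun x => a * x
  map_rel' := by
    rintro x y ⟨hne, hs⟩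
    refine ⟨fun h => hne (mul_left_cancel h), ?_⟩
    have h1 : (a * x)⁻¹ * (a * y) = x⁻¹ * y := by group
    have h2 : (a * y)⁻¹ * (a * x) = y⁻¹ * x := by group
    rw [h1, h2]; exact hs

private lemma cayley_connected (hgen : Subgroup.closure S = ⊤) : (cayley G S).Connected := by
  have key : ∀ g : G, (cayley G S).Reachable 1 g := by
    intro g
    have hg : g ∈ Subgroup.closure S := hgen ▸ Subgroup.mem_top g
    induction hg using Subgroup.closure_induction with
    | mem x hx =>
      rcases eq_or_ne x 1 with rfl | hne
      · exact Reachable.refl _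
      · exact SimpleGraph.Adj.reachable ⟨fun h => hne h.symm, Or.inl (by simpa)⟩
    | one => exact Reachable.refl _
    | mul x y hx hy ihx ihy =>
      have h : (cayley G S).Reachable (x * 1) (x * y) := ihy.map (cayleyMulLeft S x)
      rw [mul_one] at h
      exact ihx.trans h
    | inv x hx ihx =>
      have h : (cayley G S).Reachable (x⁻¹ * 1) (x⁻¹ * x) := ihx.map (cayleyMulLeft S x⁻¹)
      rw [mul_one, inv_mul_cancel] at h
      exact h.symm
  haveI : Nonempty G := ⟨1⟩
  exact SimpleGraph.Connected.mk fun u v => (key u).symm.trans (key v)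

private lemma wlen_one : wlen S (1 : G) = 0 := SimpleGraph.dist_self

private lemma wlen_adj (hgen : Subgroup.closure S = ⊤) {g h : G}
    (hadj : (cayley G S).Adj g h) : wlen S h ≤ wlen S g + 1 := by
  have ht := (cayley_connected hgen).dist_triangle (u := (1 : G)) (v := g) (w := h)
  have hd : (cayley G S).dist g h ≤ 1 := by
    simpa [SimpleGraph.Adj.toWalk] using SimpleGraph.dist_le hadj.toWalk
  unfold wlen
  omega

private lemma exists_adj_pred (hgen : Subgroup.closure S = ⊤) {u : G} {m : ℕ}
    (hu : wlen S u = m + 1) : ∃ h : G, (cayley G S).Adj h u ∧ wlen S h = m := by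
  have hconn := cayley_connected hgen
  obtain ⟨w, hw⟩ := hconn.exists_walk_length_eq_dist 1 u
  have hne : u ≠ 1 := by
    rintro rfl
    rw [wlen_one] at hu
    omega
  obtain ⟨x, hadj, w', hweq⟩ := SimpleGraph.Walk.exists_eq_cons_of_ne hne w.reverse
  have hlen : w'.length = m := by
    have h1 := congrArg SimpleGraph.Walk.length hweq
    rw [SimpleGraph.Walk.length_reverse] at h1
    rw [SimpleGraph.Walk.length_cons] at h1
    have : w.length = wlen S u := hw
    omega
  have h1 : wlen S x ≤ m := by
    have h2 := SimpleGraph.dist_le w'.reverse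
    rwa [SimpleGraph.Walk.length_reverse, hlen] at h2
  have h2 : m + 1 ≤ wlen S x + 1 := by
    have ht := hconn.dist_triangle (u := (1 : G)) (v := x) (w := u)
    have hd : (cayley G S).dist x u ≤ 1 := by
      simpa [SimpleGraph.Adj.toWalk] using SimpleGraph.dist_le hadj.symm.toWalk
    unfold wlen at hu ⊢
    omega
  exact ⟨x, hadj.symm, by omega⟩

private lemma finite_ball (hS : S.Finite) (hgen : Subgroup.closure S = ⊤) :
    ∀ n : ℕ, {g : G | wlen S g ≤ n}.Finite := by
  intro n
  induction n with
  | zero =>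
    refine Set.Finite.subset (Set.finite_singleton (1 : G)) fun g hg => ?_
    have hg0 : wlen S g = 0 := Nat.le_zero.mp hg
    have := (cayley_connected hgen).dist_eq_zero_iff.mp hg0
    simp [this.symm]
  | succ n ih =>
    have hsub : {g : G | wlen S g ≤ n + 1} ⊆
        (fun p : G × G => p.1 * p.2) '' ({g : G | wlen S g ≤ n} ×ˢ insert 1 (S ∪ S⁻¹)) := by
      intro g hg
      rcases Nat.lt_or_ge (wlen S g) (n + 1) with h | h
      · exact ⟨(g, 1), ⟨Nat.lt_succ_iff.mp h, Set.mem_insert _ _⟩, mul_one g⟩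
      · have heq : wlen S g = n + 1 := le_antisymm hg h
        obtain ⟨h', hadj, hh'⟩ := exists_adj_pred hgen heq
        rcases hadj.2 with hs | hs
        · exact ⟨(h', h'⁻¹ * g), ⟨le_of_eq hh', Set.mem_insert_of_mem _ (Or.inl hs)⟩,
            by simp⟩
        · refine ⟨(h', h'⁻¹ * g), ⟨le_of_eq hh', Set.mem_insert_of_mem _ (Or.inr ?_)⟩, by simp⟩
          rw [Set.mem_inv]
          simpa [mul_inv_rev] using hs
    exact Set.Finite.subset (Set.Finite.image _ (ih.prod ((hS.union hS.inv).insert 1))) hsub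

private lemma walk_down (hgen : Subgroup.closure S = ⊤) :
    ∀ (m t : ℕ), t ≤ m → ∀ u : G, wlen S u = m →
      ∃ (x : G) (w : (cayley G S).Walk x u), wlen S x = t ∧
        ∀ v ∈ w.support, t ≤ wlen S v ∧ wlen S v ≤ m := by
  intro m
  induction m with
  | zero =>
    intro t ht u hu
    refine ⟨u, SimpleGraph.Walk.nil, by omega, fun v hv => ?_⟩
    rw [SimpleGraph.Walk.support_nil, List.mem_singleton] at hv
    subst hv
    omega
  | succ m ih =>
    intro t ht u hu
    rcases eq_or_lt_of_le ht with heq | hlt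
    · refine ⟨u, SimpleGraph.Walk.nil, by omega, fun v hv => ?_⟩
      rw [SimpleGraph.Walk.support_nil, List.mem_singleton] at hv
      subst hv
      omega
    · have htm : t ≤ m := Nat.lt_succ_iff.mp hlt
      obtain ⟨h', hadj, hh'⟩ := exists_adj_pred hgen hu
      obtain ⟨x, w, hx, hw⟩ := ih t htm h' hh'
      refine ⟨x, w.concat hadj, hx, fun v hv => ?_⟩
      rw [SimpleGraph.Walk.support_concat, List.mem_append,
        List.mem_singleton] at hv
      rcases hv with hv | rfl
      · exact ⟨(hw v hv).1, le_trans (hw v hv).2 (Nat.le_succ m)⟩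
      · omega

private lemma lift_walk {A : Set G} {x y : G} (w : (cayley G S).Walk x y)
    (hs : ∀ v ∈ w.support, v ∈ A) (hx : x ∈ A) (hy : y ∈ A) :
    ((cayley G S).induce A).Reachable ⟨x, hx⟩ ⟨y, hy⟩ := by
  induction w with
  | nil => exact Reachable.refl _
  | @cons a b c hadj w' ih =>
    have hb : b ∈ A := hs b (by simp [SimpleGraph.Walk.support_cons])
    have hab : ((cayley G S).induce A).Adj ⟨a, hx⟩ ⟨b, hb⟩ := hadj
    refine hab.reachable.trans (ih (fun v hv => hs v ?_) hb hy)
    rw [SimpleGraph.Walk.support_cons]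
    exact List.mem_cons_of_mem _ hv

private lemma proj_reachable {A : Set G} {x y : ↥A}
    (h : ((cayley G S).induce A).Reachable x y) : connectedIn S A ↑x ↑y := by
  obtain ⟨w⟩ := h
  refine ⟨w.map (SimpleGraph.Embedding.comap (Function.Embedding.subtype _)
    (cayley G S)).toHom, fun v hv => ?_⟩
  erw [SimpleGraph.Walk.support_map, List.mem_map] at hv
  obtain ⟨a, _, rfl⟩ := hv
  exact a.2

private lemma connectedIn_symm {A : Set G} {x y : G} (h : connectedIn S A x y) :
    connectedIn S A y x := by
  obtain ⟨w, hw⟩ := h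
  exact ⟨w.reverse, fun v hv => hw v
    (by rwa [SimpleGraph.Walk.support_reverse, List.mem_reverse] at hv)⟩

private lemma connectedIn_trans {A : Set G} {x y z : G} (h1 : connectedIn S A x y)
    (h2 : connectedIn S A y z) : connectedIn S A x z := by
  obtain ⟨w1, hw1⟩ := h1
  obtain ⟨w2, hw2⟩ := h2
  refine ⟨w1.append w2, fun v hv => ?_⟩
  rcases (SimpleGraph.Walk.mem_support_append_iff w1 w2).mp hv with hv | hv
  · exact hw1 v hv
  · exact hw2 v hv

private lemma infPart_of_connectedIn {A : Set G} {u v : G} (h : connectedIn S A u v)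
    (hu : u ∈ infPart S A) : v ∈ infPart S A := by
  obtain ⟨w, hw⟩ := h
  have hvA : v ∈ A := hw v w.end_mem_support
  obtain ⟨huA, hinf⟩ := hu
  have hr := lift_walk w hw huA hvA
  exact ⟨hvA, hinf.mono fun z hz => hr.symm.trans hz⟩

private lemma exists_far (hS : S.Finite) (hgen : Subgroup.closure S = ⊤) {A : Set G} {u : G}
    (hu : u ∈ infPart S A) (m : ℕ) : ∃ p : G, connectedIn S A u p ∧ m < wlen S p := by
  obtain ⟨huA, hinf⟩ := hu
  have himg : (Subtype.val ''
      {z : ↥A | ((cayley G S).induce A).Reachable ⟨u, huA⟩ z}).Infinite :=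
    hinf.image Subtype.val_injective.injOn
  obtain ⟨p, hp, hpb⟩ := (himg.diff (finite_ball hS hgen m)).nonempty
  obtain ⟨z, hz, rfl⟩ := hp
  exact ⟨↑z, proj_reachable hz, by simpa using Nat.lt_of_not_le hpb⟩

private lemma walk_truncate (hgen : Subgroup.closure S = ⊤) (t : ℕ) {u p : G}
    (w : (cayley G S).Walk u p) :
    wlen S u ≤ t → t ≤ wlen S p →
      ∃ (x : G) (w' : (cayley G S).Walk u x), wlen S x = t ∧
        ∀ v ∈ w'.support, v ∈ w.support ∧ wlen S v ≤ t := by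
  induction w with
  | nil =>
    intro h1 h2
    refine ⟨_, SimpleGraph.Walk.nil, le_antisymm h1 h2, fun v hv => ?_⟩
    rw [SimpleGraph.Walk.support_nil, List.mem_singleton] at hv
    subst hv
    exact ⟨SimpleGraph.Walk.start_mem_support _, h1⟩
  | @cons a b c hadj w' ih =>
    intro h1 h2
    rcases eq_or_lt_of_le h1 with heq | hlt
    · refine ⟨a, SimpleGraph.Walk.nil, heq, fun v hv => ?_⟩
      rw [SimpleGraph.Walk.support_nil, List.mem_singleton] at hv
      subst hv
      exact ⟨SimpleGraph.Walk.start_mem_support _, h1⟩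
    · have hb : wlen S b ≤ t := by
        have := wlen_adj hgen hadj
        omega
      obtain ⟨x, w'', hx, hw''⟩ := ih hb h2
      refine ⟨x, SimpleGraph.Walk.cons hadj w'', hx, fun v hv => ?_⟩
      rw [SimpleGraph.Walk.support_cons] at hv
      rcases List.mem_cons.mp hv with rfl | hv
      · exact ⟨SimpleGraph.Walk.start_mem_support _, h1⟩
      · obtain ⟨hm, hle⟩ := hw'' v hv
        refine ⟨?_, hle⟩
        rw [SimpleGraph.Walk.support_cons]
        exact List.mem_cons_of_mem _ hm

private lemma exists_base [Infinite G] (hS : S.Finite) (hgen : Subgroup.closure S = ⊤) (n : ℕ) :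
    ∃ x : G, wlen S x = n ∧ x ∈ infPart S {g : G | n ≤ wlen S g} := by
  classical
  set A : Set G := {g : G | n ≤ wlen S g} with hAdef
  have hAinf : A.Infinite := by
    have hc : Aᶜ.Finite := (finite_ball hS hgen n).subset fun g hg => by
      simp only [hAdef, Set.mem_compl_iff, Set.mem_setOf_eq, not_le] at hg
      exact Nat.le_of_lt hg
    have := hc.infinite_compl
    rwa [compl_compl] at this
  haveI : Infinite ↥A := hAinf.to_subtype
  haveI : Finite ↥{g : G | wlen S g ≤ n} := (finite_ball hS hgen n).to_subtype
  have hex : ∀ u : ↥A, ∃ x : G, wlen S x = n ∧ connectedIn S A x ↑u := by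
    intro u
    obtain ⟨x, w, hx, hw⟩ := walk_down hgen (wlen S ↑u) n u.2 ↑u rfl
    exact ⟨x, hx, w, fun v hv => (hw v hv).1⟩
  let f : ↥A → ↥{g : G | wlen S g ≤ n} := fun u => ⟨(hex u).choose, le_of_eq (hex u).choose_spec.1⟩
  obtain ⟨b, hb⟩ := Finite.exists_infinite_fiber f
  have hfib : (f ⁻¹' {b}).Infinite := Set.infinite_coe_iff.mp hb
  obtain ⟨u₀, hu₀⟩ := hfib.nonempty
  set x₀ : G := (hex u₀).choose with hx₀def
  have hx₀ : wlen S x₀ = n := (hex u₀).choose_spec.1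
  have hA : x₀ ∈ A := le_of_eq hx₀.symm
  refine ⟨x₀, hx₀, hA, ?_⟩
  have hsub : f ⁻¹' {b} ⊆ {z : ↥A | ((cayley G S).induce A).Reachable ⟨x₀, hA⟩ z} := by
    intro u hu'
    have hxu : (hex u).choose = x₀ := by
      have h1 : (f u : G) = (b : G) := congrArg Subtype.val hu'
      have h2 : (f u₀ : G) = (b : G) := congrArg Subtype.val hu₀
      simp only [f] at h1 h2
      rw [hx₀def]
      exact h1.trans h2.symm
    have hc := (hex u).choose_spec.2
    rw [hxu] at hc
    obtain ⟨w, hw⟩ := hc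
    exact lift_walk w hw hA u.2
  exact hfib.mono hsub

private lemma key_connect (hS : S.Finite) (hgen : Subgroup.closure S = ⊤) {n l k : ℕ}
    (hlk : l ≤ k) {u : G} (hu : u ∈ sphereInf S n k) :
    ∃ x : G, (x ∈ wSphere S (n + l) ∩ infPart S {g : G | n ≤ wlen S g}) ∧
      connectedIn S (sphereInf S n k) x u := by
  classical
  obtain ⟨⟨hun, hunk⟩, huinf⟩ := hu
  rcases le_or_gt (n + l) (wlen S u) with hge | hltt
  · obtain ⟨x, w, hx, hw⟩ := walk_down hgen (wlen S u) (n + l) hge u rfl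
    have hsupp : ∀ v ∈ w.support, v ∈ sphereInf S n k := by
      intro v hv
      have h1 := hw v hv
      have hconn_vu : connectedIn S {g : G | n ≤ wlen S g} v u :=
        ⟨w.dropUntil v hv, fun z hz => by
          have := hw z (SimpleGraph.Walk.support_dropUntil_subset w hv hz)
          exact le_trans (Nat.le_add_right n l) this.1⟩
      refine ⟨⟨le_trans (Nat.le_add_right n l) h1.1, le_trans h1.2 hunk⟩, ?_⟩
      exact infPart_of_connectedIn (connectedIn_symm hconn_vu) huinf
    exact ⟨x, ⟨hx, (hsupp x w.start_mem_support).2⟩, w, hsupp⟩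
  · obtain ⟨p, hup, hpfar⟩ := exists_far hS hgen huinf (n + l)
    obtain ⟨w, hwA⟩ := hup
    obtain ⟨x, w', hx, hw'⟩ := walk_truncate hgen (n + l) w (Nat.le_of_lt hltt)
      (Nat.le_of_lt hpfar)
    have hsupp : ∀ v ∈ w'.support, v ∈ sphereInf S n k := by
      intro v hv
      obtain ⟨hvw, hvle⟩ := hw' v hv
      have hvA : v ∈ {g : G | n ≤ wlen S g} := hwA v hvw
      refine ⟨⟨hvA, le_trans hvle (by omega)⟩, ?_⟩
      have hcuv : connectedIn S {g : G | n ≤ wlen S g} u v :=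
        ⟨w.takeUntil v hvw, fun z hz =>
          hwA z (SimpleGraph.Walk.support_takeUntil_subset w hvw hz)⟩
      exact infPart_of_connectedIn hcuv huinf
    exact ⟨x, ⟨hx, (hsupp x w'.end_mem_support).2⟩, connectedIn_symm ⟨w', hsupp⟩⟩

end StmtTwoAux

/-- For `0 ≤ ℓ ≤ k`, the graph `S(n,k)^∞` is connected iff any two elements
of `S(n+ℓ) ∩ B(n-1)^{c,∞}` are connected by paths staying inside `S(n,k)^∞`. -/
theorem stmt_2 {G : Type*} [Group G] [Infinite G] (S : Set G) (hSfin : S.Finite)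
    (hgen : Subgroup.closure S = ⊤) (l k n : ℕ) (hlk : l ≤ k) :
    SpheresConn S n k ↔
      ∀ x y : G, x ∈ wSphere S (n + l) ∩ infPart S {g | n ≤ wlen S g} →
        y ∈ wSphere S (n + l) ∩ infPart S {g | n ≤ wlen S g} →
        connectedIn S (sphereInf S n k) x y := by
  constructor
  · intro hc x y hx hy
    have hx' : x ∈ sphereInf S n k := by
      refine ⟨⟨?_, ?_⟩, hx.2⟩
      · have h := hx.1
        simp only [wSphere, Set.mem_setOf_eq] at h
        omega
      · have h := hx.1
        simp only [wSphere, Set.mem_setOf_eq] at h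
        omega
    have hy' : y ∈ sphereInf S n k := by
      refine ⟨⟨?_, ?_⟩, hy.2⟩
      · have h := hy.1
        simp only [wSphere, Set.mem_setOf_eq] at h
        omega
      · have h := hy.1
        simp only [wSphere, Set.mem_setOf_eq] at h
        omega
    exact proj_reachable (hc.preconnected ⟨x, hx'⟩ ⟨y, hy'⟩)
  · intro H
    rw [SpheresConn, SimpleGraph.connected_iff]
    obtain ⟨x₀, hx₀n, hx₀inf⟩ := exists_base hSfin hgen n
    have hx₀mem : x₀ ∈ sphereInf S n k := ⟨⟨le_of_eq hx₀n.symm, by omega⟩, hx₀inf⟩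
    refine ⟨fun a b => ?_, ⟨⟨x₀, hx₀mem⟩⟩⟩
    obtain ⟨xa, hxa, hca⟩ := key_connect hSfin hgen hlk a.2
    obtain ⟨xb, hxb, hcb⟩ := key_connect hSfin hgen hlk b.2
    have htot : connectedIn S (sphereInf S n k) ↑a ↑b :=
      connectedIn_trans (connectedIn_symm hca) (connectedIn_trans (H xa xb hxa hxb) hcb)
    obtain ⟨w, hw⟩ := htot
    exact lift_walk w hw a.2 b.2
end

section
/- Let L be a finite group and consider Z ≀ L with the switch-walk-switch generating set L{±1}L. For every g = (z,f) ∈ Z ≀ L which is not of the form (0, δ_s) for s ∈ L, the word length is |g| = 2·b(g) + 2·|a(g)| − |z|. -/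
variable {G : Type*} [Group G]

variable (Γ L : Type*) [Group Γ] [Group L]

section Aux

open Multiplicative SimpleGraph

variable {L : Type*} [Group L]

open Classical in
/-- The lamp configuration with lamp `l` at position `m`. -/
noncomputable def dirac (m : MZ) (l : L) : ↥(LampGroup MZ L) :=
  ⟨fun x => if x = m then l else 1, by
    refine Set.Finite.subset (Set.finite_singleton m) fun x hx => ?_
    rcases eq_or_ne x m with h | h
    · simp [h]
    · exact absurd (if_neg h) hx⟩

lemma dirac_apply (m : MZ) (l : L) (x : MZ) :
    (dirac m l : MZ → L) x = if x = m then l else 1 := rfl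

lemma dirac_one (m : MZ) : dirac m (1 : L) = 1 := by
  apply Subtype.ext
  funext x
  simp [dirac_apply]

lemma dirac_mul_dirac (m : MZ) (l l' : L) :
    dirac m l * dirac m l' = dirac m (l * l') := by
  apply Subtype.ext
  funext x
  by_cases h : x = m <;> simp [dirac_apply, h]

lemma shift_dirac (γ m : MZ) (l : L) :
    shiftHom MZ L γ (dirac m l) = dirac (γ * m) l := by
  apply Subtype.ext
  funext x
  show (if γ⁻¹ * x = m then l else 1) = if x = γ * m then l else 1
  simp only [inv_mul_eq_iff_eq_mul]

/-- A generic generator in the switch-walk-switch generating set. -/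
noncomputable def genW (l l' : L) (σ : MZ) : Wreath MZ L :=
  ⟨dirac 1 l * dirac σ l', σ⟩

lemma lampElt_eq (l : L) : lampElt MZ L l = (⟨dirac 1 l, 1⟩ : Wreath MZ L) := by
  apply SemidirectProduct.ext
  · apply Subtype.ext
    funext x
    by_cases h : x = 1 <;> simp [lampElt, dirac, h]
  · rfl

lemma genW_eq (l l' : L) (σ : MZ) :
    lampElt MZ L l * baseElt MZ L σ * lampElt MZ L l' = genW l l' σ := by
  rw [lampElt_eq, lampElt_eq]
  show ((⟨dirac 1 l, 1⟩ : Wreath MZ L) * ⟨1, σ⟩) * ⟨dirac 1 l', 1⟩ = _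
  rw [SemidirectProduct.mul_def, SemidirectProduct.mul_def]
  simp [genW, shift_dirac]

lemma genW_mem {σ : MZ} (hσ : σ ∈ genZ) (l l' : L) :
    genW l l' σ ∈ swsw MZ L genZ :=
  ⟨l, l', σ, hσ, (genW_eq l l' σ).symm⟩

lemma mem_swsw {s : Wreath MZ L} (hs : s ∈ swsw MZ L genZ) :
    ∃ l l' σ, σ ∈ genZ ∧ s = genW l l' σ := by
  obtain ⟨l, l', σ, hσ, rfl⟩ := hs
  exact ⟨l, l', σ, hσ, genW_eq l l' σ⟩

lemma mul_genW (g : Wreath MZ L) (l l' : L) (σ : MZ) :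
    g * genW l l' σ
      = ⟨g.left * dirac g.right l * dirac (g.right * σ) l', g.right * σ⟩ := by
  rw [genW, SemidirectProduct.mul_def]
  simp [map_mul, shift_dirac, mul_assoc]

lemma step_of_mul {g h : Wreath MZ L} (s : Wreath MZ L) (hs : s ∈ swsw MZ L genZ)
    (hh : h = g * s) :
    (toAdd h.right - toAdd g.right = 1 ∨ toAdd h.right - toAdd g.right = -1) ∧
      ∀ x : MZ, x ≠ g.right → x ≠ h.right → (h.left : MZ → L) x = (g.left : MZ → L) x := by
  obtain ⟨l, l', σ, hσ, rfl⟩ := mem_swsw hs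
  rw [mul_genW] at hh
  subst hh
  constructor
  · have : toAdd (g.right * σ) = toAdd g.right + toAdd σ := toAdd_mul _ _
    rcases hσ with h | h <;> rw [h] at this ⊢ <;> simp [this]
  · intro x hx1 hx2
    have e1 : (dirac g.right l : MZ → L) x = 1 := by
      rw [dirac_apply, if_neg hx1]
    have e2 : (dirac (g.right * σ) l' : MZ → L) x = 1 := by
      rw [dirac_apply, if_neg hx2]
    show ((g.left * dirac g.right l * dirac (g.right * σ) l' : ↥(LampGroup MZ L)) : MZ → L) x
        = _
    simp only [Subgroup.coe_mul, Pi.mul_apply, e1, e2, mul_one]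

lemma step_lemma {g h : Wreath MZ L}
    (hadj : (cayley (Wreath MZ L) (swsw MZ L genZ)).Adj g h) :
    (toAdd h.right - toAdd g.right = 1 ∨ toAdd h.right - toAdd g.right = -1) ∧
      ∀ x : MZ, x ≠ g.right → x ≠ h.right → (h.left : MZ → L) x = (g.left : MZ → L) x := by
  obtain ⟨hne, hc | hc⟩ := hadj
  · exact step_of_mul _ hc (by group)
  · obtain ⟨hd, hl⟩ := step_of_mul (g := h) (h := g) _ hc (by group)
    exact ⟨by omega, fun x h1 h2 => (hl x h2 h1).symm⟩

lemma walk_lamp {x y : Wreath MZ L}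
    (w : (cayley (Wreath MZ L) (swsw MZ L genZ)).Walk x y) (m : MZ)
    (hm : ∀ v ∈ w.support, v.right ≠ m) :
    (y.left : MZ → L) m = (x.left : MZ → L) m := by
  induction w with
  | nil => rfl
  | @cons u v y hadj p ih =>
    have h1 : m ≠ u.right := (hm u (by simp)).symm
    have h2 : m ≠ v.right := (hm v (by simp)).symm
    have := (step_lemma hadj).2 m h1 h2
    rw [ih (fun q hq => hm q (by simp [hq])), this]

lemma walk_lipschitz {x y : Wreath MZ L}
    (w : (cayley (Wreath MZ L) (swsw MZ L genZ)).Walk x y) :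
    |toAdd y.right - toAdd x.right| ≤ (w.length : ℤ) := by
  induction w with
  | nil => simp
  | @cons u v y hadj p ih =>
    have h2 : |toAdd v.right - toAdd u.right| ≤ 1 := by
      rcases (step_lemma hadj).1 with h | h <;> simp [h]
    calc |toAdd y.right - toAdd u.right|
        ≤ |toAdd y.right - toAdd v.right| + |toAdd v.right - toAdd u.right| :=
          abs_sub_le _ _ _
      _ ≤ (p.length : ℤ) + 1 := add_le_add ih h2
      _ = ((p.length + 1 : ℕ) : ℤ) := by push_cast; ring
      _ = _ := by rw [SimpleGraph.Walk.length_cons]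

lemma base_form (z : ℤ) (F : ↥(LampGroup MZ L)) (hz : z ≠ 0)
    (hsupp : ∀ t : ℤ, (F : MZ → L) (Multiplicative.ofAdd t) ≠ 1 → t = 0 ∨ t = z) :
    (⟨F, Multiplicative.ofAdd z⟩ : Wreath MZ L)
      = genW ((F : MZ → L) 1) ((F : MZ → L) (Multiplicative.ofAdd z)) (ofAdd z) := by
  have hne : (ofAdd z : MZ) ≠ 1 := by
    intro h
    exact hz (by simpa using congrArg toAdd h)
  rw [genW]
  congr 1
  apply Subtype.ext
  funext x
  show (F : MZ → L) x
      = ((dirac 1 ((F : MZ → L) 1) * dirac (ofAdd z) ((F : MZ → L) (ofAdd z)) :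
          ↥(LampGroup MZ L)) : MZ → L) x
  rw [Subgroup.coe_mul, Pi.mul_apply, dirac_apply, dirac_apply]
  by_cases h1 : x = 1
  · rw [if_pos h1, if_neg (by rw [h1]; exact hne.symm), mul_one, h1]
  · rw [if_neg h1]
    by_cases h2 : x = ofAdd z
    · rw [if_pos h2, one_mul, h2]
    · rw [if_neg h2, mul_one]
      by_contra hFx
      have hx : ofAdd (toAdd x) = x := ofAdd_toAdd x
      rcases hsupp (toAdd x) (by rw [hx]; exact hFx) with h | h
      · exact h1 (by rw [← hx, h]; rfl)
      · exact h2 (by rw [← hx, h])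

lemma genW_ne_right {g : Wreath MZ L} {l l' : L} {σ : MZ} (hσ : σ ∈ genZ) :
    g ≠ g * genW l l' σ := by
  intro h
  have := congrArg SemidirectProduct.right h
  rw [mul_genW] at this
  have : toAdd g.right = toAdd g.right + toAdd σ := by
    simpa [toAdd_mul] using congrArg toAdd this
  rcases hσ with hs | hs <;> rw [hs] at this <;> simp at this

lemma adj_mul_genW (g : Wreath MZ L) {l l' : L} {σ : MZ} (hσ : σ ∈ genZ) :
    (cayley (Wreath MZ L) (swsw MZ L genZ)).Adj g (g * genW l l' σ) :=
  ⟨genW_ne_right hσ, Or.inl (by rw [inv_mul_cancel_left]; exact genW_mem hσ l l')⟩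

lemma exists_walk_ub (n : ℕ) :
    ∀ (a b z : ℤ) (F : ↥(LampGroup MZ L)),
    a ≤ 0 → 0 ≤ b → a ≤ z → z ≤ b →
    (∀ t : ℤ, (F : MZ → L) (Multiplicative.ofAdd t) ≠ 1 → a ≤ t ∧ t ≤ b) →
    (n : ℤ) = 2 * b - 2 * a - |z| → 1 ≤ n →
    ∃ w : (cayley (Wreath MZ L) (swsw MZ L genZ)).Walk 1 ⟨F, Multiplicative.ofAdd z⟩,
      w.length ≤ n := by
  induction n with
  | zero => intro a b z F _ _ _ _ _ _ h1; omega
  | succ n ih =>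
    intro a b z F ha0 hb0 haz hzb hsupp hn hn1
    have habs := abs_cases z
    rcases Nat.eq_zero_or_pos n with hn0 | hnpos
    · -- base case: a single generator
      subst hn0
      have hba : b - a = 1 ∧ |z| = 1 := by
        constructor <;> omega
      have hz : z = 1 ∨ z = -1 := by omega
      have hzne : z ≠ 0 := by omega
      have heq := base_form z F hzne (fun t ht => by
        have := hsupp t ht
        rcases hz with h | h <;> omega)
      have hσ : (ofAdd z : MZ) ∈ genZ := by
        rcases hz with h | h
        · rw [h]; exact Set.mem_insert _ _
        · rw [h]; exact Set.mem_insert_of_mem _ rfl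
      have hg1 : (⟨F, Multiplicative.ofAdd z⟩ : Wreath MZ L)
          = 1 * genW ((F : MZ → L) 1) ((F : MZ → L) (Multiplicative.ofAdd z)) (ofAdd z) := by
        rw [one_mul]; exact heq
      have hadj : (cayley (Wreath MZ L) (swsw MZ L genZ)).Adj 1 ⟨F, Multiplicative.ofAdd z⟩ := by
        rw [hg1]
        exact adj_mul_genW 1 hσ
      exact ⟨SimpleGraph.Walk.cons hadj SimpleGraph.Walk.nil, by simp⟩
    · -- inductive step
      by_cases hA : 0 ≤ z ∧ z < b
      · -- move the cursor up: peel a step down at the end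
        obtain ⟨w', hw'⟩ := ih a b (z + 1) F ha0 hb0 (by omega) (by omega) hsupp
          (by have : |z + 1| = z + 1 := abs_of_nonneg (by omega); push_cast at hn ⊢; omega)
          hnpos
        have hσ : (ofAdd (-1) : MZ) ∈ genZ := Set.mem_insert_of_mem _ rfl
        have heq : (⟨F, Multiplicative.ofAdd z⟩ : Wreath MZ L)
            = (⟨F, Multiplicative.ofAdd (z + 1)⟩ : Wreath MZ L)
              * genW (1 : L) (1 : L) (ofAdd (-1)) := by
          rw [mul_genW, dirac_one, dirac_one, mul_one, mul_one]
          congr 1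
          rw [← ofAdd_add]
          norm_num
        refine ⟨(w'.concat (heq ▸ adj_mul_genW _ hσ)), ?_⟩
        rw [SimpleGraph.Walk.length_concat]
        omega
      · by_cases hB : z ≤ 0 ∧ a < z
        · obtain ⟨w', hw'⟩ := ih a b (z - 1) F ha0 hb0 (by omega) (by omega) hsupp
            (by have : |z - 1| = -(z - 1) := abs_of_nonpos (by omega)
                push_cast at hn ⊢; omega)
            hnpos
          have hσ : (ofAdd (1 : ℤ) : MZ) ∈ genZ := Set.mem_insert _ _
          have heq : (⟨F, Multiplicative.ofAdd z⟩ : Wreath MZ L)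
              = (⟨F, Multiplicative.ofAdd (z - 1)⟩ : Wreath MZ L)
                * genW (1 : L) (1 : L) (ofAdd (1 : ℤ)) := by
            rw [mul_genW, dirac_one, dirac_one, mul_one, mul_one]
            congr 1
            rw [← ofAdd_add]
            norm_num
          refine ⟨(w'.concat (heq ▸ adj_mul_genW _ hσ)), ?_⟩
          rw [SimpleGraph.Walk.length_concat]
          omega
        · -- extreme cases: z = b > 0 or z = a < 0
          rcases le_or_gt 0 z with hz0 | hz0
          · -- z = b > 0 : clear the lamp at b
            have hzb' : z = b := by omega
            have hb1 : 1 ≤ b := by omega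
            subst hzb'
            set Fb := (F : MZ → L) (Multiplicative.ofAdd z) with hFb
            set F' : ↥(LampGroup MZ L) := F * dirac (ofAdd z) Fb⁻¹ with hF'
            have hF'app : ∀ t : ℤ, (F' : MZ → L) (Multiplicative.ofAdd t)
                = (F : MZ → L) (ofAdd t) * (if ofAdd t = (ofAdd z : MZ) then Fb⁻¹ else 1) := by
              intro t
              rw [hF', Subgroup.coe_mul, Pi.mul_apply, dirac_apply]
            obtain ⟨w', hw'⟩ := ih a (z - 1) (z - 1) F' ha0 (by omega) (by omega) le_rfl
              (by
                intro t ht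
                rw [hF'app] at ht
                by_cases htz : t = z
                · rw [if_pos (by rw [htz]), htz, ← hFb, mul_inv_cancel] at ht
                  exact absurd rfl ht
                · rw [if_neg (fun h => htz (by simpa using congrArg toAdd h)), mul_one] at ht
                  have := hsupp t ht
                  omega)
              (by have h1 : |z - 1| = z - 1 := abs_of_nonneg (by omega)
                  push_cast at hn ⊢; omega)
              hnpos
            have hσ : (ofAdd (1 : ℤ) : MZ) ∈ genZ := Set.mem_insert _ _
            have heq : (⟨F, Multiplicative.ofAdd z⟩ : Wreath MZ L)
                = (⟨F', Multiplicative.ofAdd (z - 1)⟩ : Wreath MZ L)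
                  * genW (1 : L) Fb (ofAdd (1 : ℤ)) := by
              rw [mul_genW, dirac_one, mul_one]
              have hr : (ofAdd (z - 1) : MZ) * ofAdd (1 : ℤ) = ofAdd z := by
                rw [← ofAdd_add]; norm_num
              rw [hr]
              congr 1
              rw [hF', mul_assoc, dirac_mul_dirac, inv_mul_cancel, dirac_one, mul_one]
            refine ⟨(w'.concat (heq ▸ adj_mul_genW _ hσ)), ?_⟩
            rw [SimpleGraph.Walk.length_concat]
            omega
          · -- z = a < 0 : clear the lamp at a
            have hza : z = a := by omega
            subst hza
            set Fa := (F : MZ → L) (Multiplicative.ofAdd z) with hFa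
            set F' : ↥(LampGroup MZ L) := F * dirac (ofAdd z) Fa⁻¹ with hF'
            have hF'app : ∀ t : ℤ, (F' : MZ → L) (Multiplicative.ofAdd t)
                = (F : MZ → L) (ofAdd t) * (if ofAdd t = (ofAdd z : MZ) then Fa⁻¹ else 1) := by
              intro t
              rw [hF', Subgroup.coe_mul, Pi.mul_apply, dirac_apply]
            obtain ⟨w', hw'⟩ := ih (z + 1) b (z + 1) F' (by omega) hb0 le_rfl (by omega)
              (by
                intro t ht
                rw [hF'app] at ht
                by_cases htz : t = z
                · rw [if_pos (by rw [htz]), htz, ← hFa, mul_inv_cancel] at ht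
                  exact absurd rfl ht
                · rw [if_neg (fun h => htz (by simpa using congrArg toAdd h)), mul_one] at ht
                  have := hsupp t ht
                  omega)
              (by have h1 : |z + 1| = -(z + 1) := abs_of_nonpos (by omega)
                  push_cast at hn ⊢; omega)
              hnpos
            have hσ : (ofAdd (-1 : ℤ) : MZ) ∈ genZ := Set.mem_insert_of_mem _ rfl
            have heq : (⟨F, Multiplicative.ofAdd z⟩ : Wreath MZ L)
                = (⟨F', Multiplicative.ofAdd (z + 1)⟩ : Wreath MZ L)
                  * genW (1 : L) Fa (ofAdd (-1 : ℤ)) := by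
              rw [mul_genW, dirac_one, mul_one]
              have hr : (ofAdd (z + 1) : MZ) * ofAdd (-1 : ℤ) = ofAdd z := by
                rw [← ofAdd_add]; norm_num
              rw [hr]
              congr 1
              rw [hF', mul_assoc, dirac_mul_dirac, inv_mul_cancel, dirac_one, mul_one]
            refine ⟨(w'.concat (heq ▸ adj_mul_genW _ hσ)), ?_⟩
            rw [SimpleGraph.Walk.length_concat]
            omega

end Aux

/-- In `ℤ ≀ L` with the switch-walk-switch generating set `L{±1}L`,
the word length of `g = (z, f)` not of the form `(0, δ_s)` equals `2b + 2|a| - |z|`,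
where `a = min({t | f t ≠ e} ∪ {0,z})` and `b = max({t | f t ≠ e} ∪ {0,z})`. -/
theorem stmt_3 {L : Type*} [Group L] [Finite L]
    (z : ℤ) (f : MZ → L) (hf : f ∈ LampGroup MZ L) (a b : ℤ)
    (ha : IsLeast ({t : ℤ | f (Multiplicative.ofAdd t) ≠ 1} ∪ {0, z}) a)
    (hb : IsGreatest ({t : ℤ | f (Multiplicative.ofAdd t) ≠ 1} ∪ {0, z}) b)
    (hg : ¬ ∃ s : L, (⟨⟨f, hf⟩, Multiplicative.ofAdd z⟩ : Wreath MZ L) = lampElt MZ L s) :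
    (wlen (swsw MZ L genZ) (⟨⟨f, hf⟩, Multiplicative.ofAdd z⟩ : Wreath MZ L) : ℤ)
      = 2 * b + 2 * |a| - |z| := by
  classical
  set g : Wreath MZ L := ⟨⟨f, hf⟩, Multiplicative.ofAdd z⟩ with hgdef
  have ha0 : a ≤ 0 := ha.2 (Or.inr (Or.inl rfl))
  have haz : a ≤ z := ha.2 (Or.inr (Or.inr rfl))
  have hb0 : (0 : ℤ) ≤ b := hb.2 (Or.inr (Or.inl rfl))
  have hzb : z ≤ b := hb.2 (Or.inr (Or.inr rfl))
  have hsupp : ∀ t : ℤ, f (Multiplicative.ofAdd t) ≠ 1 → a ≤ t ∧ t ≤ b :=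
    fun t ht => ⟨ha.2 (Or.inl ht), hb.2 (Or.inl ht)⟩
  have hz1 : z ≤ |z| := le_abs_self z
  have hz2 : -z ≤ |z| := neg_le_abs z
  have hz3 : |z| ≤ b - a := by
    rcases abs_cases z with ⟨h, _⟩ | ⟨h, _⟩ <;> omega
  -- `b - a ≥ 1`, otherwise `g` would be of the excluded form
  have hba : 1 ≤ b - a := by
    by_contra hcon
    have hab : a = 0 ∧ b = 0 := by omega
    have hz0 : z = 0 := by omega
    apply hg
    refine ⟨f 1, ?_⟩
    apply SemidirectProduct.ext
    · apply Subtype.ext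
      funext x
      show f x = _
      by_cases h : x = 1
      · simp [lampElt, h]
      · have hfx : f x = 1 := by
          by_contra hfx
          have h2 := hsupp (Multiplicative.toAdd x) (by rwa [ofAdd_toAdd])
          have h3 : Multiplicative.toAdd x = 0 := by omega
          exact h (by rw [← ofAdd_toAdd x, h3]; rfl)
        simp [lampElt, h, hfx]
    · show Multiplicative.ofAdd z = 1
      rw [hz0]
      rfl
  set N : ℕ := (2 * b - 2 * a - |z|).toNat with hNdef
  have hN : (N : ℤ) = 2 * b - 2 * a - |z| := Int.toNat_of_nonneg (by omega)
  have hN1 : 1 ≤ N := by omega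
  obtain ⟨w, hw⟩ := exists_walk_ub N a b z ⟨f, hf⟩ ha0 hb0 haz hzb hsupp hN hN1
  have hub : (cayley (Wreath MZ L) (swsw MZ L genZ)).dist 1 g ≤ N :=
    le_trans (SimpleGraph.dist_le w) hw
  have hreach : (cayley (Wreath MZ L) (swsw MZ L genZ)).Reachable 1 g := ⟨w⟩
  obtain ⟨p, hp⟩ := hreach.exists_walk_length_eq_dist
  -- locate vertices at cursor positions `a` and `b`
  have e0 : Multiplicative.toAdd ((1 : Wreath MZ L).right) = (0 : ℤ) := rfl
  have eg : Multiplicative.toAdd (g.right) = z := rfl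
  have hva : ∃ v ∈ p.support, Multiplicative.toAdd v.right = a := by
    rcases ha.1 with hmem | hmem | hmem
    · by_contra hcon
      push_neg at hcon
      have hlc := walk_lamp p (Multiplicative.ofAdd a) (fun v hv h =>
        hcon v hv (by rw [h]; simp))
      exact hmem hlc
    · exact ⟨1, p.start_mem_support, by rw [e0, hmem]⟩
    · exact ⟨g, p.end_mem_support, by rw [eg, hmem]⟩
  have hvb : ∃ v ∈ p.support, Multiplicative.toAdd v.right = b := by
    rcases hb.1 with hmem | hmem | hmem
    · by_contra hcon
      push_neg at hcon
      have hlc := walk_lamp p (Multiplicative.ofAdd b) (fun v hv h =>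
        hcon v hv (by rw [h]; simp))
      exact hmem hlc
    · exact ⟨1, p.start_mem_support, by rw [e0, hmem]⟩
    · exact ⟨g, p.end_mem_support, by rw [eg, hmem]⟩
  obtain ⟨va, hva_mem, hva_cur⟩ := hva
  obtain ⟨vb, hvb_mem, hvb_cur⟩ := hvb
  have hsplit := p.take_spec hva_mem
  have hlen : (p.takeUntil va hva_mem).length + (p.dropUntil va hva_mem).length
      = p.length := by
    conv_rhs => rw [← hsplit]
    rw [SimpleGraph.Walk.length_append]
  have hvb' : vb ∈ (p.takeUntil va hva_mem).support
      ∨ vb ∈ (p.dropUntil va hva_mem).support := by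
    rw [← SimpleGraph.Walk.mem_support_append_iff, hsplit]
    exact hvb_mem
  have h3 := walk_lipschitz (p.dropUntil va hva_mem)
  rw [eg, hva_cur] at h3
  have h3a : z - a ≤ ((p.dropUntil va hva_mem).length : ℤ) :=
    le_trans (le_abs_self _) h3
  have h3b : -(z - a) ≤ ((p.dropUntil va hva_mem).length : ℤ) :=
    le_trans (neg_le_abs _) h3
  have hlb : N ≤ p.length := by
    rcases hvb' with hcase | hcase
    · -- the walk reaches `b` before `a`
      have hsplit1 := (p.takeUntil va hva_mem).take_spec hcase
      have hlen1 : ((p.takeUntil va hva_mem).takeUntil vb hcase).length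
          + ((p.takeUntil va hva_mem).dropUntil vb hcase).length
          = (p.takeUntil va hva_mem).length := by
        conv_rhs => rw [← hsplit1]
        rw [SimpleGraph.Walk.length_append]
      have h1 := walk_lipschitz ((p.takeUntil va hva_mem).takeUntil vb hcase)
      rw [e0, hvb_cur] at h1
      have h1a : b - 0 ≤ (((p.takeUntil va hva_mem).takeUntil vb hcase).length : ℤ) :=
        le_trans (le_abs_self _) h1
      have h2 := walk_lipschitz ((p.takeUntil va hva_mem).dropUntil vb hcase)
      rw [hva_cur, hvb_cur] at h2
      have h2b : -(a - b) ≤ (((p.takeUntil va hva_mem).dropUntil vb hcase).length : ℤ) :=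
        le_trans (neg_le_abs _) h2
      omega
    · -- the walk reaches `a` before `b`
      have hsplit2 := (p.dropUntil va hva_mem).take_spec hcase
      have hlen2 : ((p.dropUntil va hva_mem).takeUntil vb hcase).length
          + ((p.dropUntil va hva_mem).dropUntil vb hcase).length
          = (p.dropUntil va hva_mem).length := by
        conv_rhs => rw [← hsplit2]
        rw [SimpleGraph.Walk.length_append]
      have h1 := walk_lipschitz (p.takeUntil va hva_mem)
      rw [e0, hva_cur] at h1
      have h1b : -(a - 0) ≤ ((p.takeUntil va hva_mem).length : ℤ) :=
        le_trans (neg_le_abs _) h1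
      have h2 := walk_lipschitz ((p.dropUntil va hva_mem).takeUntil vb hcase)
      rw [hva_cur, hvb_cur] at h2
      have h2a : b - a ≤ (((p.dropUntil va hva_mem).takeUntil vb hcase).length : ℤ) :=
        le_trans (le_abs_self _) h2
      have h4 := walk_lipschitz ((p.dropUntil va hva_mem).dropUntil vb hcase)
      rw [eg, hvb_cur] at h4
      have h4b : -(z - b) ≤ (((p.dropUntil va hva_mem).dropUntil vb hcase).length : ℤ) :=
        le_trans (neg_le_abs _) h4
      omega
  have hdist : (cayley (Wreath MZ L) (swsw MZ L genZ)).dist 1 g = N := by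
    omega
  have haa : |a| = -a := abs_of_nonpos ha0
  show ((cayley (Wreath MZ L) (swsw MZ L genZ)).dist 1 g : ℤ) = 2 * b + 2 * |a| - |z|
  rw [hdist, hN, haa]
  ring
end
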